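/- Let μ₁, μ₂, μ₃ > 0 and set μ* = max(μ₁, μ₂, μ₃). Suppose that for all i ≠ j one has μᵢ μⱼ (μ* − 1) ≤ 2 μ* (equivalently μᵢμⱼ ≤ 2 + 2/(μ* − 1) when μ* > 1; the condition is automatic when μ* ≤ 1). Then φ(μ₁, μ₂, μ₃) := 4 + μ₁μ₂μ₃ − μ₁μ₂ − μ₁μ₃ − μ₂μ₃ ≥ 0. -/

import Mathlib

lemma phi_aux (a b c : ℝ) (ha : 0 < a) (hb : 0 < b) (hc : 0 < c)
    (hac : a ≤ c) (hbc : b ≤ c)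
    (h1 : a * c * (c - 1) ≤ 2 * c) (h2 : b * c * (c - 1) ≤ 2 * c) :
    0 ≤ 4 + a * b * c - a * b - a * c - b * c := by
  rcases le_or_gt c 1 with h | h
  · nlinarith [mul_pos (mul_pos ha hb) hc, mul_nonneg ha.le hb.le]
  · have ha2 : a * (c - 1) ≤ 2 := by
      have := (mul_le_mul_iff_of_pos_right hc).mp (by nlinarith : (a * (c - 1)) * c ≤ 2 * c)
      linarith
    have hb2 : b * (c - 1) ≤ 2 := by
      have := (mul_le_mul_iff_of_pos_right hc).mp (by nlinarith : (b * (c - 1)) * c ≤ 2 * c)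
      linarith
    rcases le_or_gt 2 c with h2c | h2c
    · nlinarith [mul_nonneg (by linarith : (0:ℝ) ≤ c - a * (c - 1) - (c - 2))
        (by linarith : (0:ℝ) ≤ c - b * (c - 1) - (c - 2)),
        mul_nonneg (by linarith : (0:ℝ) ≤ c - a * (c - 1)) (by linarith : (0:ℝ) ≤ c - 2)]
    · have hax : c - a * (c - 1) ≥ c * (2 - c) := by nlinarith
      have hbx : c - b * (c - 1) ≥ c * (2 - c) := by nlinarith
      have hpos : 0 < c * (2 - c) := by nlinarith
      nlinarith [mul_le_mul hax hbx hpos.le (by linarith), sq_nonneg (c - 1)]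

/-- **Lemma 9.2 (Appendix I)**. If `μ₁, μ₂, μ₃ > 0` and, with `μ* = max(μ₁,μ₂,μ₃)`,
`μᵢμⱼ(μ* − 1) ≤ 2μ*` for all `i ≠ j`, then
`φ(μ₁,μ₂,μ₃) = 4 + μ₁μ₂μ₃ − μ₁μ₂ − μ₁μ₃ − μ₂μ₃ ≥ 0`. -/
theorem phi_nonneg
    (μ₁ μ₂ μ₃ : ℝ) (h1 : 0 < μ₁) (h2 : 0 < μ₂) (h3 : 0 < μ₃)
    (h12 : μ₁ * μ₂ * (max μ₁ (max μ₂ μ₃) - 1) ≤ 2 * max μ₁ (max μ₂ μ₃))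
    (h13 : μ₁ * μ₃ * (max μ₁ (max μ₂ μ₃) - 1) ≤ 2 * max μ₁ (max μ₂ μ₃))
    (h23 : μ₂ * μ₃ * (max μ₁ (max μ₂ μ₃) - 1) ≤ 2 * max μ₁ (max μ₂ μ₃)) :
    0 ≤ 4 + μ₁ * μ₂ * μ₃ - μ₁ * μ₂ - μ₁ * μ₃ - μ₂ * μ₃ := by
  set M := max μ₁ (max μ₂ μ₃) with hM
  have hm1 : μ₁ ≤ M := le_max_left _ _
  have hm2 : μ₂ ≤ M := le_trans (le_max_left _ _) (le_max_right _ _)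
  have hm3 : μ₃ ≤ M := le_trans (le_max_right _ _) (le_max_right _ _)
  rcases le_total μ₁ (max μ₂ μ₃) with h | h
  · rcases le_total μ₂ μ₃ with h' | h'
    · -- M = μ₃
      have hMe : M = μ₃ := by rw [hM, max_eq_right h, max_eq_right h']
      have := phi_aux μ₁ μ₂ μ₃ h1 h2 h3 (hMe ▸ hm1) (hMe ▸ hm2)
        (by rw [hMe] at h13; nlinarith [h13]) (by rw [hMe] at h23; nlinarith [h23])
      linarith
    · -- M = μ₂
      have hMe : M = μ₂ := by rw [hM, max_eq_right h, max_eq_left h']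
      have := phi_aux μ₁ μ₃ μ₂ h1 h3 h2 (hMe ▸ hm1) (hMe ▸ hm3)
        (by rw [hMe] at h12; nlinarith [h12]) (by rw [hMe] at h23; nlinarith [h23])
      nlinarith [this]
  · -- M = μ₁
    have hMe : M = μ₁ := by rw [hM, max_eq_left h]
    have := phi_aux μ₂ μ₃ μ₁ h2 h3 h1 (hMe ▸ hm2) (hMe ▸ hm3)
      (by rw [hMe] at h12; nlinarith [h12]) (by rw [hMe] at h13; nlinarith [h13])
    nlinarith [this]
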